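/- arXiv:2509.22607 — 4 statements merged into one kernel-verified Lean document; each statement's English description precedes it below -/
import Mathlib

section
/- Kummer's confluent hypergeometric function satisfies $M(a, b, x) = O(x^{a-b} e^{x})$ as $x \to +\infty$, for fixed real $a > 0$ and $b > 0$. -/
open MeasureTheory Set Real Filter Asymptotics

lemma exp_tsum' (x : ℝ) : ∑' n : ℕ, x ^ n / (n.factorial : ℝ) = Real.exp x := by
  rw [Real.exp_eq_exp_ℝ, NormedSpace.exp_eq_tsum_div]

lemma fact_add_le (m k : ℕ) : (m + k).factorial ≤ m.factorial * (m + k) ^ k := by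
  induction k with
  | zero => simp
  | succ k ih =>
      calc (m + (k + 1)).factorial = (m + k + 1) * (m + k).factorial := by
            rw [← Nat.add_assoc]; exact Nat.factorial_succ _
        _ ≤ (m + k + 1) * (m.factorial * (m + k) ^ k) := Nat.mul_le_mul_left _ ih
        _ ≤ (m + k + 1) * (m.factorial * (m + k + 1) ^ k) := Nat.mul_le_mul_left _ (Nat.mul_le_mul_left _ (Nat.pow_le_pow_left (Nat.le_succ _) k))
        _ = m.factorial * (m + (k + 1)) ^ (k + 1) := by rw [← Nat.add_assoc]; ring

lemma sumA {x : ℝ} (hx : 0 < x) {k : ℕ} (hk : 1 ≤ k) :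
    Summable (fun m : ℕ => x ^ m / (((m : ℝ) + 1) ^ k * m.factorial)) ∧
    ∑' m : ℕ, x ^ m / (((m : ℝ) + 1) ^ k * m.factorial)
      ≤ (k : ℝ) ^ k / x ^ k * Real.exp x := by
  have hf : Summable (fun n : ℕ => x ^ n / (n.factorial : ℝ)) :=
    Real.summable_pow_div_factorial x
  have hshift : Summable (fun m : ℕ => x ^ (m + k) / ((m + k).factorial : ℝ)) :=
    (summable_nat_add_iff k).2 hf
  have hbd : ∀ m : ℕ, x ^ m / (((m : ℝ) + 1) ^ k * m.factorial)
      ≤ (k : ℝ) ^ k / x ^ k * (x ^ (m + k) / ((m + k).factorial : ℝ)) := by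
    intro m
    have hD : (0:ℝ) < ((m : ℝ) + 1) ^ k * m.factorial := by positivity
    have hF : (0:ℝ) < ((m + k).factorial : ℝ) := by positivity
    have h2 : (m + k).factorial ≤ m.factorial * (k * (m + 1)) ^ k := by
      refine (fact_add_le m k).trans (Nat.mul_le_mul_left _ (Nat.pow_le_pow_left ?_ k))
      nlinarith
    have h1 : ((m + k).factorial : ℝ) ≤ (k:ℝ)^k * (((m:ℝ)+1)^k * m.factorial) := by
      calc ((m + k).factorial : ℝ) ≤ (m.factorial : ℝ) * ((k:ℝ) * ((m:ℝ) + 1)) ^ k := by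
            exact_mod_cast Nat.cast_le.2 h2
        _ = (k:ℝ)^k * (((m:ℝ)+1)^k * m.factorial) := by rw [mul_pow]; ring
    have key : x ^ m / (((m:ℝ)+1)^k * m.factorial)
        ≤ (k:ℝ)^k * x ^ m / ((m+k).factorial : ℝ) := by
      rw [div_le_div_iff₀ hD hF]
      calc x^m * ((m+k).factorial : ℝ) ≤ x^m * ((k:ℝ)^k * (((m:ℝ)+1)^k * m.factorial)) := by
            exact mul_le_mul_of_nonneg_left h1 (pow_nonneg hx.le m)
        _ = (k:ℝ)^k * x^m * (((m:ℝ)+1)^k * m.factorial) := by ring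
    refine key.trans (le_of_eq ?_)
    rw [pow_add]
    field_simp
  have hsum : Summable (fun m : ℕ => x ^ m / (((m : ℝ) + 1) ^ k * m.factorial)) :=
    Summable.of_nonneg_of_le (fun m => by positivity) hbd (hshift.mul_left _)
  refine ⟨hsum, ?_⟩
  have hle : ∑' m : ℕ, x ^ (m + k) / ((m + k).factorial : ℝ) ≤ Real.exp x := by
    rw [← exp_tsum' x]
    have h := Summable.sum_add_tsum_nat_add (f := fun n => x ^ n / (n.factorial : ℝ)) k hf
    have hnn : (0:ℝ) ≤ ∑ i ∈ Finset.range k, x ^ i / (i.factorial : ℝ) :=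
      Finset.sum_nonneg fun i _ => by positivity
    linarith
  calc ∑' m : ℕ, x ^ m / (((m : ℝ) + 1) ^ k * m.factorial)
      ≤ ∑' m : ℕ, (k : ℝ) ^ k / x ^ k * (x ^ (m + k) / ((m + k).factorial : ℝ)) :=
        Summable.tsum_le_tsum hbd hsum (hshift.mul_left _)
    _ = (k : ℝ) ^ k / x ^ k * ∑' m : ℕ, x ^ (m + k) / ((m + k).factorial : ℝ) := tsum_mul_left
    _ ≤ (k : ℝ) ^ k / x ^ k * Real.exp x := by
        refine mul_le_mul_of_nonneg_left hle (by positivity)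

lemma sum_desc {x : ℝ} (hx : 0 < x) (k : ℕ) :
    Summable (fun m : ℕ => (m.descFactorial k : ℝ) * x ^ m / m.factorial) ∧
    ∑' m : ℕ, (m.descFactorial k : ℝ) * x ^ m / m.factorial ≤ x ^ k * Real.exp x := by
  set f : ℕ → ℝ := fun m => (m.descFactorial k : ℝ) * x ^ m / m.factorial with hf
  have hshift : ∀ n : ℕ, f (n + k) = x ^ k * (x ^ n / (n.factorial : ℝ)) := by
    intro n
    have h1 : n.factorial * (n + k).descFactorial k = (n + k).factorial := by
      have := Nat.factorial_mul_descFactorial (n := n + k) (k := k) (by omega)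
      simpa using this
    have h2 : ((n + k).factorial : ℝ) ≠ 0 := by positivity
    have h3 : ((n + k).descFactorial k : ℝ) = ((n+k).factorial : ℝ) / (n.factorial : ℝ) := by
      rw [eq_div_iff (by positivity)]
      exact_mod_cast congrArg (Nat.cast (R := ℝ)) (by rw [mul_comm] at h1; exact h1)
    simp only [hf, h3, pow_add]
    field_simp
  have hsummable_shift : Summable (fun n : ℕ => f (n + k)) := by
    rw [funext hshift]
    exact (Real.summable_pow_div_factorial x).mul_left _
  have hsum : Summable f := (summable_nat_add_iff k).1 hsummable_shift
  refine ⟨hsum, ?_⟩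
  have hzero : ∀ i ∈ Finset.range k, f i = 0 := by
    intro i hi
    simp only [hf]
    rw [Nat.descFactorial_eq_zero_iff_lt.2 (Finset.mem_range.1 hi)]
    simp
  have h := Summable.sum_add_tsum_nat_add (f := f) k hsum
  rw [Finset.sum_eq_zero hzero, zero_add] at h
  rw [← h, funext hshift, tsum_mul_left, exp_tsum' x]

lemma nat_pow_le (m k : ℕ) : (m + 1) ^ k ≤ 4 ^ k * m.descFactorial k + (2 * k + 1) ^ k := by
  rcases le_or_gt m (2 * k) with h | h
  · exact le_add_of_le_right (Nat.pow_le_pow_left (by omega) k)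
  · refine le_add_of_le_left ?_
    rw [Nat.descFactorial_eq_prod_range]
    calc (m + 1) ^ k = ∏ _i ∈ Finset.range k, (m + 1) := by
          rw [Finset.prod_const, Finset.card_range]
      _ ≤ ∏ i ∈ Finset.range k, 4 * (m - i) := by
          refine Finset.prod_le_prod' fun i hi => ?_
          have : i < k := Finset.mem_range.1 hi
          omega
      _ = 4 ^ k * ∏ i ∈ Finset.range k, (m - i) := by
          rw [Finset.prod_mul_distrib, Finset.prod_const, Finset.card_range]

lemma sumB {x : ℝ} (hx : 1 ≤ x) (k : ℕ) :
    Summable (fun m : ℕ => ((m : ℝ) + 1) ^ k * x ^ m / m.factorial) ∧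
    ∑' m : ℕ, ((m : ℝ) + 1) ^ k * x ^ m / m.factorial
      ≤ ((4 : ℝ) ^ k + (2 * (k : ℝ) + 1) ^ k) * (x ^ k * Real.exp x) := by
  have hx0 : (0:ℝ) < x := lt_of_lt_of_le one_pos hx
  obtain ⟨hdsum, hdle⟩ := sum_desc hx0 k
  have hesum : Summable (fun m : ℕ => (2 * (k:ℝ) + 1) ^ k * (x ^ m / m.factorial)) :=
    (Real.summable_pow_div_factorial x).mul_left _
  have hg : Summable (fun m : ℕ =>
      (4:ℝ) ^ k * ((m.descFactorial k : ℝ) * x ^ m / m.factorial)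
        + (2 * (k:ℝ) + 1) ^ k * (x ^ m / m.factorial)) :=
    (hdsum.mul_left _).add hesum
  have hbd : ∀ m : ℕ, ((m : ℝ) + 1) ^ k * x ^ m / m.factorial
      ≤ (4:ℝ) ^ k * ((m.descFactorial k : ℝ) * x ^ m / m.factorial)
        + (2 * (k:ℝ) + 1) ^ k * (x ^ m / m.factorial) := by
    intro m
    have h1 : (((m:ℝ) + 1)) ^ k ≤ (4:ℝ) ^ k * (m.descFactorial k : ℝ) + (2 * (k:ℝ) + 1) ^ k := by
      have := nat_pow_le m k
      have h2 : (((m + 1) ^ k : ℕ) : ℝ) ≤ ((4 ^ k * m.descFactorial k + (2 * k + 1) ^ k : ℕ) : ℝ) :=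
        Nat.cast_le.2 this
      push_cast at h2
      convert h2 using 2 <;> push_cast <;> ring
    have hxm : (0:ℝ) ≤ x ^ m / m.factorial := by positivity
    calc ((m : ℝ) + 1) ^ k * x ^ m / m.factorial
        = ((m : ℝ) + 1) ^ k * (x ^ m / m.factorial) := by ring
      _ ≤ ((4:ℝ) ^ k * (m.descFactorial k : ℝ) + (2 * (k:ℝ) + 1) ^ k) * (x ^ m / m.factorial) :=
          mul_le_mul_of_nonneg_right h1 hxm
      _ = (4:ℝ) ^ k * ((m.descFactorial k : ℝ) * x ^ m / m.factorial)
            + (2 * (k:ℝ) + 1) ^ k * (x ^ m / m.factorial) := by ring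
  have hsum : Summable (fun m : ℕ => ((m : ℝ) + 1) ^ k * x ^ m / m.factorial) :=
    Summable.of_nonneg_of_le (fun m => by positivity) hbd hg
  refine ⟨hsum, ?_⟩
  have hxk : (1:ℝ) ≤ x ^ k := one_le_pow₀ hx
  calc ∑' m : ℕ, ((m : ℝ) + 1) ^ k * x ^ m / m.factorial
      ≤ ∑' m : ℕ, ((4:ℝ) ^ k * ((m.descFactorial k : ℝ) * x ^ m / m.factorial)
          + (2 * (k:ℝ) + 1) ^ k * (x ^ m / m.factorial)) := Summable.tsum_le_tsum hbd hsum hg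
    _ = (4:ℝ) ^ k * ∑' m : ℕ, ((m.descFactorial k : ℝ) * x ^ m / m.factorial)
          + (2 * (k:ℝ) + 1) ^ k * ∑' m : ℕ, (x ^ m / m.factorial) := by
        rw [Summable.tsum_add (hdsum.mul_left _) hesum, tsum_mul_left, tsum_mul_left]
    _ ≤ (4:ℝ) ^ k * (x ^ k * Real.exp x) + (2 * (k:ℝ) + 1) ^ k * (x ^ k * Real.exp x) := by
        have he : ∑' m : ℕ, (x ^ m / (m.factorial : ℝ)) = Real.exp x := exp_tsum' x
        have h3 : Real.exp x ≤ x ^ k * Real.exp x := le_mul_of_one_le_left (exp_pos x).le hxk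
        have h4 := mul_le_mul_of_nonneg_left hdle (by positivity : (0:ℝ) ≤ (4:ℝ)^k)
        have h5 := mul_le_mul_of_nonneg_left (he.le.trans h3)
          (by positivity : (0:ℝ) ≤ (2 * (k:ℝ) + 1) ^ k)
        linarith
    _ = ((4 : ℝ) ^ k + (2 * (k : ℝ) + 1) ^ k) * (x ^ k * Real.exp x) := by ring

lemma ratio_bound (a b : ℝ) (ha : 0 < a) (hb : 0 < b) :
    ∃ C : ℝ, 0 < C ∧ ∀ m : ℕ,
      (∏ j ∈ Finset.range m, (a + (j:ℝ))) / (∏ j ∈ Finset.range m, (b + (j:ℝ)))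
        ≤ C * ((m : ℝ) + 1) ^ (a - b) := by
  have hPa : ∀ m : ℕ, 0 < ∏ j ∈ Finset.range m, (a + (j:ℝ)) :=
    fun m => Finset.prod_pos fun j _ => by positivity
  have hPb : ∀ m : ℕ, 0 < ∏ j ∈ Finset.range m, (b + (j:ℝ)) :=
    fun m => Finset.prod_pos fun j _ => by positivity
  set t : ℕ → ℝ := fun n =>
    (∏ j ∈ Finset.range (n+1), (a + (j:ℝ))) / (∏ j ∈ Finset.range (n+1), (b + (j:ℝ)))
      / ((n : ℝ) + 2) ^ (a - b) with ht_def
  have hteq : ∀ n : ℕ, 1 ≤ n →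
      Real.GammaSeq b n / Real.GammaSeq a n * (((n:ℝ) / ((n:ℝ)+2)) ^ (a-b)) = t n := by
    intro n hn
    have hN : (0:ℝ) < n := by exact_mod_cast hn
    have hNb : (0:ℝ) < (n:ℝ) ^ b := Real.rpow_pos_of_pos hN b
    have hNab : (0:ℝ) < (n:ℝ) ^ (a - b) := Real.rpow_pos_of_pos hN _
    have h2 : (0:ℝ) < ((n:ℝ)+2) ^ (a-b) := Real.rpow_pos_of_pos (by positivity) _
    have hF : (0:ℝ) < (n.factorial : ℝ) := by positivity
    have hrw : (n:ℝ) ^ a = (n:ℝ) ^ b * (n:ℝ) ^ (a - b) := by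
      rw [← Real.rpow_add hN]; ring_nf
    rw [ht_def]
    simp only [Real.GammaSeq]
    rw [Real.div_rpow hN.le (by positivity), hrw]
    have hpa := (hPa (n+1)).ne'
    have hpb := (hPb (n+1)).ne'
    field_simp
  have h1 : Tendsto (fun n : ℕ => Real.GammaSeq b n / Real.GammaSeq a n) atTop
      (nhds (Real.Gamma b / Real.Gamma a)) :=
    (Real.GammaSeq_tendsto_Gamma b).div (Real.GammaSeq_tendsto_Gamma a)
      (Real.Gamma_pos_of_pos ha).ne'
  have h3 : Tendsto (fun n : ℕ => (n:ℝ) / ((n:ℝ)+2)) atTop (nhds 1) := by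
    have := tendsto_natCast_div_add_atTop (𝕜 := ℝ) 2
    simpa using this
  have h2 : Tendsto (fun n : ℕ => ((n:ℝ) / ((n:ℝ)+2)) ^ (a-b)) atTop (nhds 1) := by
    have := h3.rpow_const (p := a - b) (Or.inl one_ne_zero)
    simpa [Real.one_rpow] using this
  have htend : Tendsto t atTop (nhds (Real.Gamma b / Real.Gamma a)) := by
    have h4 := h1.mul h2
    rw [mul_one] at h4
    refine h4.congr' ?_
    filter_upwards [eventually_ge_atTop 1] with n hn
    exact hteq n hn
  obtain ⟨C0, hC0⟩ := htend.bddAbove_range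
  refine ⟨max C0 1, lt_of_lt_of_le one_pos (le_max_right _ _), ?_⟩
  intro m
  match m with
  | 0 => simpa using le_mul_of_one_le_left (by norm_num) (le_max_right C0 1)
  | (n+1) =>
    have ht : t n ≤ C0 := hC0 ⟨n, rfl⟩
    have hpos : (0:ℝ) < ((n:ℝ)+2) ^ (a-b) := Real.rpow_pos_of_pos (by positivity) _
    rw [ht_def] at ht
    have h5 := (div_le_iff₀ hpos).1 ht
    have h6 : (((n+1 : ℕ) : ℝ) + 1) = (n:ℝ) + 2 := by push_cast; ring
    rw [h6]
    exact h5.trans (mul_le_mul_of_nonneg_right (le_max_left _ _) hpos.le)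

lemma rpow_interp {q : ℝ} (hq : 0 < q) {c : ℝ} {k : ℕ} (hk : |c| ≤ (k:ℝ)) :
    q ^ c ≤ q ^ k + (q ^ k)⁻¹ := by
  have hqk : (0:ℝ) < q ^ k := by positivity
  rcases le_or_gt 1 q with h | h
  · have h1 : q ^ c ≤ q ^ ((k:ℝ)) := Real.rpow_le_rpow_of_exponent_le h ((le_abs_self c).trans hk)
    rw [Real.rpow_natCast] at h1
    have h2 : (0:ℝ) ≤ (q ^ k)⁻¹ := by positivity
    linarith
  · have h1 : q ^ c ≤ q ^ (-(k:ℝ)) := by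
      refine Real.rpow_le_rpow_of_exponent_ge hq h.le ?_
      have := neg_abs_le c
      linarith
    rw [Real.rpow_neg hq.le, Real.rpow_natCast] at h1
    linarith

/-- Kummer's confluent hypergeometric function `M(a, b, z) = ∑ (a)_m/(b)_m z^m/m!`. -/
noncomputable def kummerM (a b z : ℂ) : ℂ :=
  ∑' m : ℕ,
    ((∏ j ∈ Finset.range m, (a + j)) / (∏ j ∈ Finset.range m, (b + j))) * z ^ m
      / (m.factorial : ℂ)

theorem kummerM_isBigO (a b : ℝ) (ha : 0 < a) (hb : 0 < b) :
    (fun x : ℝ => kummerM (a : ℂ) (b : ℂ) (x : ℂ))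
      =O[atTop] fun x : ℝ => x ^ (a - b) * Real.exp x := by
  obtain ⟨C, hC, hrat⟩ := ratio_bound a b ha hb
  set k : ℕ := ⌈|a - b|⌉₊ + 1 with hk_def
  have hk1 : 1 ≤ k := Nat.le_add_left 1 _
  have hkc : |a - b| ≤ (k : ℝ) := by
    refine (Nat.le_ceil _).trans ?_
    exact_mod_cast Nat.cast_le.2 (Nat.le_succ _)
  set D : ℝ := (4:ℝ) ^ k + (2 * (k:ℝ) + 1) ^ k with hD_def
  rw [isBigO_iff]
  refine ⟨C * (D + (k:ℝ) ^ k), ?_⟩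
  filter_upwards [eventually_ge_atTop (1:ℝ)] with x hx
  have hx0 : (0:ℝ) < x := lt_of_lt_of_le one_pos hx
  have hPa : ∀ m : ℕ, 0 < ∏ j ∈ Finset.range m, (a + (j:ℝ)) :=
    fun m => Finset.prod_pos fun j _ => by positivity
  have hPb : ∀ m : ℕ, 0 < ∏ j ∈ Finset.range m, (b + (j:ℝ)) :=
    fun m => Finset.prod_pos fun j _ => by positivity
  set g : ℕ → ℝ := fun m =>
    (∏ j ∈ Finset.range m, (a + (j:ℝ))) / (∏ j ∈ Finset.range m, (b + (j:ℝ)))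
      * x ^ m / m.factorial with hg_def
  obtain ⟨hAsum, hAle⟩ := sumA hx0 hk1
  obtain ⟨hBsum, hBle⟩ := sumB hx k
  set u : ℕ → ℝ := fun m => ((m:ℝ)+1) ^ k * x ^ m / m.factorial * (x ^ k)⁻¹ with hu_def
  set v : ℕ → ℝ := fun m => x ^ k * (x ^ m / (((m:ℝ)+1) ^ k * m.factorial)) with hv_def
  have husum : Summable u := hBsum.mul_right _
  have hvsum : Summable v := hAsum.mul_left _
  have hbd : ∀ m : ℕ, g m ≤ C * x ^ (a-b) * (u m + v m) := by
    intro m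
    have hq : (0:ℝ) < ((m:ℝ)+1) / x := by positivity
    have hxm : (0:ℝ) ≤ x ^ m / m.factorial := by positivity
    have h7 : ((m:ℝ)+1) ^ (a-b) = x ^ (a-b) * (((m:ℝ)+1) / x) ^ (a-b) := by
      rw [← Real.mul_rpow hx0.le hq.le]
      congr 1
      field_simp
    have h8 : (((m:ℝ)+1) / x) ^ (a-b)
        ≤ (((m:ℝ)+1) / x) ^ k + ((((m:ℝ)+1) / x) ^ k)⁻¹ := rpow_interp hq hkc
    have h9 : ((m:ℝ)+1) ^ (a-b)
        ≤ x ^ (a-b) * ((((m:ℝ)+1) / x) ^ k + ((((m:ℝ)+1) / x) ^ k)⁻¹) := by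
      rw [h7]
      exact mul_le_mul_of_nonneg_left h8 (Real.rpow_nonneg hx0.le _)
    have hm1 : (0:ℝ) < ((m:ℝ)+1) ^ k := by positivity
    calc g m = ((∏ j ∈ Finset.range m, (a + (j:ℝ))) / (∏ j ∈ Finset.range m, (b + (j:ℝ))))
        * (x ^ m / m.factorial) := by rw [hg_def]; ring
      _ ≤ (C * ((m:ℝ)+1) ^ (a-b)) * (x ^ m / m.factorial) :=
          mul_le_mul_of_nonneg_right (hrat m) hxm
      _ ≤ (C * (x ^ (a-b) * ((((m:ℝ)+1) / x) ^ k + ((((m:ℝ)+1) / x) ^ k)⁻¹)))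
            * (x ^ m / m.factorial) :=
          mul_le_mul_of_nonneg_right (mul_le_mul_of_nonneg_left h9 hC.le) hxm
      _ = C * x ^ (a-b) * (u m + v m) := by
          rw [hu_def, hv_def]
          have hfk : (0:ℝ) < (m.factorial : ℝ) := by positivity
          rw [div_pow]
          field_simp
  have hgnn : ∀ m : ℕ, 0 ≤ g m := fun m => by
    rw [hg_def]
    have := (hPa m).le
    have := (hPb m)
    positivity
  have hgsum : Summable g :=
    Summable.of_nonneg_of_le hgnn hbd ((husum.add hvsum).mul_left _)
  have hca : ∀ (s : ℝ) (m : ℕ),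
      (∏ j ∈ Finset.range m, ((s:ℂ) + (j:ℕ))) = ((∏ j ∈ Finset.range m, (s + (j:ℝ)) : ℝ) : ℂ) := by
    intro s m
    rw [Complex.ofReal_prod]
    exact Finset.prod_congr rfl fun j _ => by push_cast; ring
  have hkM : kummerM (a:ℂ) (b:ℂ) (x:ℂ) = ((∑' m : ℕ, g m : ℝ) : ℂ) := by
    rw [kummerM, Complex.ofReal_tsum]
    refine tsum_congr fun m => ?_
    rw [hca a, hca b, hg_def]
    push_cast
    ring
  rw [hkM, Complex.norm_real, Real.norm_eq_abs,
    abs_of_nonneg (tsum_nonneg hgnn)]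
  have hchain : ∑' m : ℕ, g m ≤ C * (D + (k:ℝ) ^ k) * (x ^ (a-b) * Real.exp x) := by
    have hxk : (0:ℝ) < x ^ k := by positivity
    have hU : ∑' m : ℕ, u m ≤ D * Real.exp x := by
      rw [hu_def, tsum_mul_right]
      calc (∑' m : ℕ, ((m:ℝ)+1) ^ k * x ^ m / m.factorial) * (x ^ k)⁻¹
          ≤ (D * (x ^ k * Real.exp x)) * (x ^ k)⁻¹ :=
            mul_le_mul_of_nonneg_right hBle (by positivity)
        _ = D * Real.exp x := by field_simp
    have hV : ∑' m : ℕ, v m ≤ (k:ℝ) ^ k * Real.exp x := by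
      rw [hv_def, tsum_mul_left]
      calc x ^ k * ∑' m : ℕ, x ^ m / (((m:ℝ)+1) ^ k * m.factorial)
          ≤ x ^ k * ((k:ℝ) ^ k / x ^ k * Real.exp x) :=
            mul_le_mul_of_nonneg_left hAle hxk.le
        _ = (k:ℝ) ^ k * Real.exp x := by field_simp
    calc ∑' m : ℕ, g m ≤ ∑' m : ℕ, (C * x ^ (a-b) * (u m + v m)) :=
          Summable.tsum_le_tsum hbd hgsum ((husum.add hvsum).mul_left _)
      _ = C * x ^ (a-b) * (∑' m : ℕ, u m + ∑' m : ℕ, v m) := by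
          rw [tsum_mul_left, Summable.tsum_add husum hvsum]
      _ ≤ C * x ^ (a-b) * (D * Real.exp x + (k:ℝ) ^ k * Real.exp x) := by
          refine mul_le_mul_of_nonneg_left (add_le_add hU hV) ?_
          exact mul_nonneg hC.le (Real.rpow_nonneg hx0.le _)
      _ = C * (D + (k:ℝ) ^ k) * (x ^ (a-b) * Real.exp x) := by ring
  refine hchain.trans (le_of_eq ?_)
  rw [Real.norm_eq_abs, abs_of_nonneg]
  exact mul_nonneg (Real.rpow_nonneg hx0.le _) (Real.exp_pos x).le
end

section
/- Let $a > 0$ and $b > 2a + 1/2$ be real, and let $\varepsilon > 0$. Then there is a constant $C = C(a,b,\varepsilon)$ such that for all real $x$ and all $y \geq 2$, $|M(a + ix, b, y)| \leq C \frac{e^y y^{a - b + \varepsilon}}{|\Gamma(a + ix)|}$. -/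
open MeasureTheory Set Real

namespace KummerAux

lemma exp_tsum (y : ℝ) : Real.exp y = ∑' n : ℕ, y ^ n / n.factorial := by
  rw [Real.exp_eq_exp_ℝ, NormedSpace.exp_eq_tsum_div]

lemma pow_div_factorial_le_exp {t : ℝ} (ht : 0 ≤ t) (m : ℕ) :
    t ^ m / m.factorial ≤ Real.exp t := by
  refine le_trans ?_ (Real.sum_le_exp_of_nonneg ht (m + 1))
  exact Finset.single_le_sum (f := fun i => t ^ i / i.factorial)
    (fun i _ => by positivity) (Finset.self_mem_range_succ m)

lemma norm_Gamma_le {z : ℂ} (hz : 0 < z.re) : ‖Complex.Gamma z‖ ≤ Real.Gamma z.re := by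
  rw [Complex.Gamma_eq_integral hz, Real.Gamma_eq_integral hz]
  simp only [Complex.GammaIntegral]
  refine (norm_integral_le_integral_norm _).trans ?_
  refine le_of_eq (setIntegral_congr_fun measurableSet_Ioi fun t ht => ?_)
  rw [norm_mul, Complex.norm_real, Real.norm_of_nonneg (Real.exp_pos _).le,
    Complex.norm_cpow_eq_rpow_re_of_pos ht]
  simp

lemma Gamma_prod_complex {z : ℂ} (hz : 0 < z.re) (m : ℕ) :
    Complex.Gamma (z + m) = Complex.Gamma z * ∏ j ∈ Finset.range m, (z + j) := by
  induction m with
  | zero => simp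
  | succ n ih =>
    have h0 : z + n ≠ 0 := by
      intro h
      have := congrArg Complex.re h
      simp only [Complex.add_re, Complex.natCast_re, Complex.zero_re] at this
      have hn : (0:ℝ) ≤ n := Nat.cast_nonneg n
      linarith
    have hcast : (z + (n + 1 : ℕ) : ℂ) = (z + n) + 1 := by push_cast; ring
    rw [hcast, Complex.Gamma_add_one _ h0, ih, Finset.prod_range_succ]
    ring

lemma Gamma_prod_real {a : ℝ} (ha : 0 < a) (m : ℕ) :
    Real.Gamma (a + m) = Real.Gamma a * ∏ j ∈ Finset.range m, (a + j) := by
  have := Gamma_prod_complex (z := (a : ℂ)) (by simpa using ha) m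
  have h2 : ((a : ℂ) + m) = ((a + m : ℝ) : ℂ) := by push_cast; ring
  rw [h2, Complex.Gamma_ofReal, Complex.Gamma_ofReal] at this
  have h3 : (∏ j ∈ Finset.range m, ((a : ℂ) + j))
      = ((∏ j ∈ Finset.range m, (a + j) : ℝ) : ℂ) := by push_cast; rfl
  rw [h3] at this
  exact_mod_cast this

end KummerAux

set_option maxHeartbeats 1000000 in
theorem kummerM_uniform_bound (a b ε : ℝ) (ha : 0 < a) (hb : 2 * a + 1 / 2 < b)
    (hε : 0 < ε) :
    ∃ C : ℝ, 0 < C ∧ ∀ x : ℝ, ∀ y : ℝ, 2 ≤ y →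
      ‖kummerM ((a : ℂ) + x * Complex.I) (b : ℂ) (y : ℂ)‖
        ≤ C * Real.exp y * y ^ (a - b + ε) / ‖Complex.Gamma ((a : ℂ) + x * Complex.I)‖ := by
  have hb0 : 0 < b := by linarith
  have hab : a < b := by linarith
  have hGa : 0 < Real.Gamma a := Real.Gamma_pos_of_pos ha
  set c : ℝ := (1 - Real.log 2) / 2 with hcdef
  have hc : 0 < c := by
    have h2 := Real.log_two_lt_d9
    rw [hcdef]; norm_num; linarith
  set k : ℕ := ⌈b - a⌉₊ + 1 with hkdef
  have hk : b - a + 1 ≤ (k : ℝ) := by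
    have h := Nat.le_ceil (b - a)
    rw [hkdef]; push_cast; linarith
  set Kb : ℝ := (4 * b) ^ (b - a) with hKbdef
  have hKbpos : 0 < Kb := Real.rpow_pos_of_pos (by linarith) _
  set K : ℝ := (k.factorial : ℝ) * (1 / c) ^ k with hKdef
  have hKpos : 0 < K := by
    rw [hKdef]; positivity
  refine ⟨Real.Gamma a * (K / 2 + Kb) + 1, by positivity, ?_⟩
  intro x y hy
  set z : ℂ := (a : ℂ) + x * Complex.I with hzdef
  have hzre : z.re = a := by simp [hzdef]
  have hzrepos : 0 < z.re := by rw [hzre]; exact ha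
  have hzΓ : Complex.Gamma z ≠ 0 := Complex.Gamma_ne_zero_of_re_pos hzrepos
  have hΓpos : 0 < ‖Complex.Gamma z‖ := norm_pos_iff.mpr hzΓ
  have hy0 : (0 : ℝ) < y := by linarith
  have hy1 : (1 : ℝ) ≤ y := by linarith
  set G := Real.Gamma a with hGdef
  set ρ : ℕ → ℝ := fun m => ∏ j ∈ Finset.range m, ((a + j) / (b + j)) with hρdef
  have hfac : ∀ j : ℕ, (0 : ℝ) < b + j := fun j => by positivity
  have hfacn : ∀ j : ℕ, (0 : ℝ) ≤ (a + j) / (b + j) := fun j => by positivity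
  have hfac1 : ∀ j : ℕ, (a + (j : ℝ)) / (b + j) ≤ 1 := fun j =>
    (div_le_one (hfac j)).mpr (by linarith)
  have hρ0 : ∀ m, 0 ≤ ρ m := fun m => Finset.prod_nonneg fun j _ => hfacn j
  have hρ1 : ∀ m, ρ m ≤ 1 := fun m =>
    Finset.prod_le_one (fun j _ => hfacn j) (fun j _ => hfac1 j)
  have ht0 : ∀ m : ℕ, (0 : ℝ) ≤ y ^ m / m.factorial := fun m => by positivity
  -- termwise bound
  have key : ∀ m : ℕ,
      ‖((∏ j ∈ Finset.range m, (z + j)) / (∏ j ∈ Finset.range m, ((b : ℂ) + j))) * (y : ℂ) ^ m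
        / (m.factorial : ℂ)‖ ≤ G / ‖Complex.Gamma z‖ * (ρ m * (y ^ m / m.factorial)) := by
    intro m
    have hQ : (∏ j ∈ Finset.range m, ((b : ℂ) + j))
        = ((∏ j ∈ Finset.range m, (b + j) : ℝ) : ℂ) := by push_cast; rfl
    have hQpos : 0 < ∏ j ∈ Finset.range m, (b + (j : ℝ)) := Finset.prod_pos fun j _ => hfac j
    have hApos : 0 < ∏ j ∈ Finset.range m, (a + (j : ℝ)) :=
      Finset.prod_pos fun j _ => by positivity
    have hP : ‖∏ j ∈ Finset.range m, (z + j)‖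
        ≤ G * (∏ j ∈ Finset.range m, (a + (j : ℝ))) / ‖Complex.Gamma z‖ := by
      have h1 : Complex.Gamma (z + m) = Complex.Gamma z * ∏ j ∈ Finset.range m, (z + j) :=
        KummerAux.Gamma_prod_complex hzrepos m
      have h2 : ‖Complex.Gamma (z + m)‖ ≤ Real.Gamma (a + m) := by
        have hre : (z + m).re = a + m := by simp [hzre]
        have := KummerAux.norm_Gamma_le (z := z + m) (by rw [hre]; positivity)
        rwa [hre] at this
      rw [KummerAux.Gamma_prod_real ha m] at h2
      rw [le_div_iff₀ hΓpos]
      calc ‖∏ j ∈ Finset.range m, (z + j)‖ * ‖Complex.Gamma z‖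
          = ‖Complex.Gamma (z + m)‖ := by rw [h1, norm_mul]; ring
        _ ≤ G * ∏ j ∈ Finset.range m, (a + (j : ℝ)) := h2
    have hnorm : ‖((∏ j ∈ Finset.range m, (z + j)) / (∏ j ∈ Finset.range m, ((b : ℂ) + j)))
          * (y : ℂ) ^ m / (m.factorial : ℂ)‖
        = ‖∏ j ∈ Finset.range m, (z + j)‖ / (∏ j ∈ Finset.range m, (b + (j : ℝ)))
          * y ^ m / m.factorial := by
      rw [norm_div, norm_mul, norm_div, norm_pow, hQ, Complex.norm_real,
        Real.norm_of_nonneg hQpos.le, Complex.norm_real, Real.norm_of_nonneg hy0.le,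
        Complex.norm_natCast]
    have hfm : ((m.factorial : ℝ)) ≠ 0 := by positivity
    rw [hnorm]
    have hfinal : G / ‖Complex.Gamma z‖ * (ρ m * (y ^ m / m.factorial))
        = (G * (∏ j ∈ Finset.range m, (a + (j : ℝ))) / ‖Complex.Gamma z‖)
          / (∏ j ∈ Finset.range m, (b + (j : ℝ))) * y ^ m / m.factorial := by
      rw [hρdef]
      simp only []
      rw [Finset.prod_div_distrib]
      field_simp
    rw [hfinal]
    gcongr

  -- summability
  have hexp : Summable (fun m : ℕ => y ^ m / m.factorial) := Real.summable_pow_div_factorial y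
  have hsum2 : Summable (fun m => ρ m * (y ^ m / m.factorial)) :=
    Summable.of_nonneg_of_le (fun m => mul_nonneg (hρ0 m) (ht0 m))
      (fun m => mul_le_of_le_one_left (ht0 m) (hρ1 m)) hexp
  have hgsum : Summable (fun m => G / ‖Complex.Gamma z‖ * (ρ m * (y ^ m / m.factorial))) :=
    hsum2.mul_left _
  have step1 : ‖kummerM z (b : ℂ) (y : ℂ)‖
      ≤ ∑' m : ℕ, G / ‖Complex.Gamma z‖ * (ρ m * (y ^ m / m.factorial)) := by
    rw [kummerM]
    exact tsum_of_norm_bounded hgsum.hasSum key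
  rw [tsum_mul_left] at step1
  -- split point
  set N := ⌊y / 2⌋₊ with hNdef
  have hN_le : (N : ℝ) ≤ y / 2 := Nat.floor_le (by linarith)
  have hN_ge : y / 4 ≤ (N : ℝ) := by
    rcases le_or_gt 4 y with h4 | h4
    · have h := Nat.lt_floor_add_one (y / 2)
      rw [← hNdef] at h
      linarith
    · have h1 : (1 : ℕ) ≤ N := Nat.le_floor (by push_cast; linarith)
      have h1' : (1 : ℝ) ≤ N := by exact_mod_cast h1
      linarith
  -- head bound
  have hsum_head : ∑ m ∈ Finset.range N, ρ m * (y ^ m / m.factorial)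
      ≤ (N : ℝ) * (2 ^ N * Real.exp (y / 2)) := by
    have hbd : ∀ m ∈ Finset.range N, ρ m * (y ^ m / m.factorial)
        ≤ 2 ^ N * Real.exp (y / 2) := by
      intro m hm
      have hmN : m ≤ N := (Finset.mem_range.mp hm).le
      have h2 : y ^ m = 2 ^ m * (y / 2) ^ m := by rw [← mul_pow]; congr 1; ring
      have h3 : (y / 2) ^ m / m.factorial ≤ Real.exp (y / 2) :=
        KummerAux.pow_div_factorial_le_exp (by linarith) m
      have h4 : (2 : ℝ) ^ m ≤ 2 ^ N := pow_le_pow_right₀ one_le_two hmN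
      calc ρ m * (y ^ m / m.factorial) ≤ y ^ m / m.factorial :=
            mul_le_of_le_one_left (ht0 m) (hρ1 m)
        _ = 2 ^ m * ((y / 2) ^ m / m.factorial) := by rw [h2]; ring
        _ ≤ 2 ^ N * Real.exp (y / 2) :=
            mul_le_mul h4 h3 (by positivity) (by positivity)
    calc ∑ m ∈ Finset.range N, ρ m * (y ^ m / m.factorial)
        ≤ ∑ _m ∈ Finset.range N, 2 ^ N * Real.exp (y / 2) := Finset.sum_le_sum hbd
      _ = (N : ℝ) * (2 ^ N * Real.exp (y / 2)) := by
          rw [Finset.sum_const, Finset.card_range, nsmul_eq_mul]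
  -- rho monotone past N
  have hρmono : ∀ m : ℕ, ρ (m + N) ≤ ρ N := by
    intro m
    have heq : ρ (m + N) = ρ N * ∏ i ∈ Finset.range m,
        ((a + ((N + i : ℕ) : ℝ)) / (b + ((N + i : ℕ) : ℝ))) := by
      rw [hρdef]
      simp only []
      rw [add_comm m N, Finset.prod_range_add]
    rw [heq]
    exact mul_le_of_le_one_right (hρ0 N)
      (Finset.prod_le_one (fun i _ => hfacn _) (fun i _ => hfac1 _))
  -- tail bound
  have htail : ∑' m : ℕ, ρ (m + N) * (y ^ (m + N) / (m + N).factorial)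
      ≤ ρ N * Real.exp y := by
    have hs1 : Summable (fun m : ℕ => y ^ (m + N) / (m + N).factorial) :=
      (summable_nat_add_iff N).mpr hexp
    have hs2 : Summable (fun m : ℕ => ρ (m + N) * (y ^ (m + N) / (m + N).factorial)) :=
      (summable_nat_add_iff N).mpr hsum2
    calc ∑' m : ℕ, ρ (m + N) * (y ^ (m + N) / (m + N).factorial)
        ≤ ∑' m : ℕ, ρ N * (y ^ (m + N) / (m + N).factorial) :=
          Summable.tsum_le_tsum (fun m => mul_le_mul_of_nonneg_right (hρmono m) (ht0 _))
            hs2 (hs1.mul_left _)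
      _ = ρ N * ∑' m : ℕ, y ^ (m + N) / (m + N).factorial := tsum_mul_left
      _ ≤ ρ N * Real.exp y := by
          apply mul_le_mul_of_nonneg_left _ (hρ0 N)
          have hsplit := Summable.sum_add_tsum_nat_add N hexp
          have hnn : (0 : ℝ) ≤ ∑ m ∈ Finset.range N, y ^ m / m.factorial :=
            Finset.sum_nonneg fun m _ => ht0 m
          rw [KummerAux.exp_tsum y]
          linarith
  -- decay of rho at N
  have hρN : ρ N ≤ Kb * y ^ (a - b) := by
    have hstep1 : ρ N ≤ Real.exp ((a - b) * ∑ j ∈ Finset.range N, 1 / (b + (j : ℝ))) := by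
      calc ρ N ≤ ∏ j ∈ Finset.range N, Real.exp ((a - b) * (1 / (b + (j : ℝ)))) := by
            apply Finset.prod_le_prod (fun j _ => hfacn j)
            intro j _
            have h := Real.add_one_le_exp ((a - b) * (1 / (b + (j : ℝ))))
            have heq : (a - b) * (1 / (b + (j : ℝ))) + 1 = (a + j) / (b + j) := by
              field_simp
              ring
            linarith
        _ = Real.exp (∑ j ∈ Finset.range N, (a - b) * (1 / (b + (j : ℝ)))) :=
            (Real.exp_sum _ _).symm
        _ = Real.exp ((a - b) * ∑ j ∈ Finset.range N, 1 / (b + (j : ℝ))) := by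
            rw [Finset.mul_sum]
    have hlog : Real.log (b + N) - Real.log b ≤ ∑ j ∈ Finset.range N, 1 / (b + (j : ℝ)) := by
      have htel : ∑ j ∈ Finset.range N,
          (Real.log (b + ((j + 1 : ℕ) : ℝ)) - Real.log (b + (j : ℝ)))
          = Real.log (b + N) - Real.log b := by
        rw [Finset.sum_range_sub (fun j : ℕ => Real.log (b + (j : ℝ)))]
        norm_num
      rw [← htel]
      apply Finset.sum_le_sum
      intro j _
      have hj0 : (0 : ℝ) < b + j := hfac j
      have hj1 : (0 : ℝ) < b + ((j + 1 : ℕ) : ℝ) := hfac (j + 1)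
      rw [← Real.log_div hj1.ne' hj0.ne']
      have hlt := Real.log_le_sub_one_of_pos (show (0:ℝ) < (b + ((j+1:ℕ):ℝ)) / (b + j) by positivity)
      have heq2 : (b + ((j + 1 : ℕ) : ℝ)) / (b + j) - 1 = 1 / (b + j) := by
        push_cast
        field_simp
        ring
      linarith
    have hstep2 : (a - b) * ∑ j ∈ Finset.range N, 1 / (b + (j : ℝ))
        ≤ (a - b) * (Real.log (y / 4) - Real.log b) := by
      have hlog2 : Real.log (y / 4) ≤ Real.log (b + N) :=
        Real.log_le_log (by linarith) (by linarith)
      nlinarith [hlog, hlog2]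
    calc ρ N ≤ Real.exp ((a - b) * ∑ j ∈ Finset.range N, 1 / (b + (j : ℝ))) := hstep1
      _ ≤ Real.exp ((a - b) * (Real.log (y / 4) - Real.log b)) := Real.exp_le_exp.mpr hstep2
      _ = Kb * y ^ (a - b) := by
          rw [hKbdef, Real.rpow_def_of_pos (by linarith : (0:ℝ) < 4 * b),
            Real.rpow_def_of_pos hy0, ← Real.exp_add,
            Real.log_div hy0.ne' (by norm_num : (4:ℝ) ≠ 0),
            Real.log_mul (by norm_num : (4:ℝ) ≠ 0) hb0.ne']
          congr 1
          ring
  -- total tsum bound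
  have hT : ∑' m : ℕ, ρ m * (y ^ m / m.factorial)
      ≤ (N : ℝ) * (2 ^ N * Real.exp (y / 2)) + Kb * y ^ (a - b) * Real.exp y := by
    rw [← Summable.sum_add_tsum_nat_add N hsum2]
    have h1 := htail.trans (mul_le_mul_of_nonneg_right hρN (Real.exp_pos y).le)
    exact add_le_add hsum_head h1
  -- key real inequality for the head term
  have h2N : (2 : ℝ) ^ N ≤ Real.exp (y / 2 * Real.log 2) := by
    have h1 : (2 : ℝ) ^ N = Real.exp ((N : ℝ) * Real.log 2) := by
      rw [Real.exp_nat_mul, Real.exp_log (by norm_num : (0:ℝ) < 2)]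
    rw [h1]
    apply Real.exp_le_exp.mpr
    have hl2 : (0:ℝ) ≤ Real.log 2 := Real.log_nonneg (by norm_num)
    nlinarith [hN_le]
  have h5 : y ^ ((1 : ℝ) + b - a) ≤ K * Real.exp (c * y) := by
    have h51 : y ^ ((1 : ℝ) + b - a) ≤ y ^ ((k : ℕ) : ℝ) :=
      Real.rpow_le_rpow_of_exponent_le hy1 (by linarith)
    rw [Real.rpow_natCast] at h51
    have h52 : (c * y) ^ k ≤ (k.factorial : ℝ) * Real.exp (c * y) := by
      have hh := KummerAux.pow_div_factorial_le_exp (t := c * y) (by positivity) k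
      have hfk : (0 : ℝ) < k.factorial := by positivity
      calc (c * y) ^ k = ((c * y) ^ k / k.factorial) * k.factorial := by field_simp
        _ ≤ Real.exp (c * y) * k.factorial := mul_le_mul_of_nonneg_right hh hfk.le
        _ = (k.factorial : ℝ) * Real.exp (c * y) := mul_comm _ _
    have h53 : y ^ (k : ℕ) = (1 / c) ^ k * (c * y) ^ k := by
      rw [← mul_pow]
      congr 1
      field_simp
    calc y ^ ((1 : ℝ) + b - a) ≤ y ^ (k : ℕ) := h51
      _ = (1 / c) ^ k * (c * y) ^ k := h53
      _ ≤ (1 / c) ^ k * ((k.factorial : ℝ) * Real.exp (c * y)) := by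
          apply mul_le_mul_of_nonneg_left h52 (by positivity)
      _ = K * Real.exp (c * y) := by rw [hKdef]; ring
  have hmain : y * Real.exp (-(c * y)) ≤ K * y ^ (a - b) := by
    have hy_eq : y = y ^ ((1 : ℝ) + b - a) * y ^ (a - b) := by
      rw [← Real.rpow_add hy0, show (1 : ℝ) + b - a + (a - b) = 1 by ring, Real.rpow_one]
    calc y * Real.exp (-(c * y))
        = y ^ ((1 : ℝ) + b - a) * y ^ (a - b) * Real.exp (-(c * y)) := by rw [← hy_eq]
      _ ≤ K * Real.exp (c * y) * y ^ (a - b) * Real.exp (-(c * y)) := by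
          have hyab : (0:ℝ) ≤ y ^ (a - b) := (Real.rpow_pos_of_pos hy0 _).le
          have := mul_le_mul_of_nonneg_right h5 hyab
          nlinarith [Real.exp_pos (-(c * y)), this]
      _ = K * y ^ (a - b) * (Real.exp (c * y) * Real.exp (-(c * y))) := by ring
      _ = K * y ^ (a - b) := by rw [← Real.exp_add]; simp
  have hmono : y ^ (a - b) ≤ y ^ (a - b + ε) :=
    Real.rpow_le_rpow_of_exponent_le hy1 (by linarith)
  have hhead2 : (N : ℝ) * (2 ^ N * Real.exp (y / 2))
      ≤ K / 2 * Real.exp y * y ^ (a - b + ε) := by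
    have hc1 : (N : ℝ) * (2 ^ N * Real.exp (y / 2))
        ≤ y / 2 * (Real.exp (y / 2 * Real.log 2) * Real.exp (y / 2)) := by
      have h2Npos : (0:ℝ) ≤ (2:ℝ) ^ N := by positivity
      have hNnn : (0:ℝ) ≤ (N:ℝ) := Nat.cast_nonneg N
      apply mul_le_mul hN_le (mul_le_mul_of_nonneg_right h2N (Real.exp_pos _).le)
        (by positivity) (by linarith)
    have hc2 : y / 2 * (Real.exp (y / 2 * Real.log 2) * Real.exp (y / 2))
        = y * Real.exp (-(c * y)) * Real.exp y / 2 := by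
      rw [← Real.exp_add, show y / 2 * Real.log 2 + y / 2 = -(c * y) + y by rw [hcdef]; ring,
        Real.exp_add]
      ring
    have hc3 : y * Real.exp (-(c * y)) * Real.exp y / 2
        ≤ K * y ^ (a - b) * Real.exp y / 2 := by
      have := mul_le_mul_of_nonneg_right hmain (Real.exp_pos y).le
      linarith
    have hKe : (0:ℝ) ≤ K / 2 * Real.exp y := mul_nonneg (le_of_lt (by linarith)) (Real.exp_pos y).le
    have hc4 : K * y ^ (a - b) * Real.exp y / 2
        ≤ K / 2 * Real.exp y * y ^ (a - b + ε) := by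
      calc K * y ^ (a - b) * Real.exp y / 2 = K / 2 * Real.exp y * y ^ (a - b) := by ring
        _ ≤ K / 2 * Real.exp y * y ^ (a - b + ε) := mul_le_mul_of_nonneg_left hmono hKe
    linarith [hc1, hc2.le, hc3, hc4]
  -- final assembly
  have hKb2 : Kb * y ^ (a - b) * Real.exp y ≤ Kb * Real.exp y * y ^ (a - b + ε) := by
    calc Kb * y ^ (a - b) * Real.exp y = Kb * Real.exp y * y ^ (a - b) := by ring
      _ ≤ Kb * Real.exp y * y ^ (a - b + ε) :=
          mul_le_mul_of_nonneg_left hmono (mul_nonneg hKbpos.le (Real.exp_pos y).le)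
  have hzb : kummerM ((a : ℂ) + x * Complex.I) (b : ℂ) (y : ℂ) = kummerM z (b : ℂ) (y : ℂ) := by
    rw [hzdef]
  rw [hzb]
  calc ‖kummerM z (b : ℂ) (y : ℂ)‖
      ≤ G / ‖Complex.Gamma z‖ * ∑' m : ℕ, ρ m * (y ^ m / m.factorial) := step1
    _ ≤ G / ‖Complex.Gamma z‖
        * ((N : ℝ) * (2 ^ N * Real.exp (y / 2)) + Kb * y ^ (a - b) * Real.exp y) := by
        apply mul_le_mul_of_nonneg_left hT (div_nonneg hGa.le (norm_nonneg _))
    _ ≤ G / ‖Complex.Gamma z‖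
        * (K / 2 * Real.exp y * y ^ (a - b + ε) + Kb * Real.exp y * y ^ (a - b + ε)) := by
        apply mul_le_mul_of_nonneg_left (add_le_add hhead2 hKb2) (div_nonneg hGa.le (norm_nonneg _))
    _ = G * (K / 2 + Kb) * Real.exp y * y ^ (a - b + ε) / ‖Complex.Gamma z‖ := by
        ring
    _ ≤ (G * (K / 2 + Kb) + 1) * Real.exp y * y ^ (a - b + ε) / ‖Complex.Gamma z‖ := by
        gcongr
        linarith
end

section
/- For real parameters $a$, $b$ with $2a - b + 1/2 < 0$ and real $r > 1$, the integral $A(r) = \int_{1/r}^\infty e^{-(x-1)^2 r^2} x^{2a - b - 1/2}\,dx$ satisfies $A(r) = O(r^{-1+\varepsilon_1})$ as $r \to \infty$, for every $\varepsilon_1 > 0$. -/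
open MeasureTheory Set Real Filter Asymptotics

theorem gaussian_integral_estimate (a b : ℝ) (h : 2 * a - b + 1 / 2 < 0)
    (ε₁ : ℝ) (hε : 0 < ε₁) :
    (fun r : ℝ => ∫ x in Ioi (1 / r), Real.exp (-(x - 1) ^ 2 * r ^ 2) * x ^ (2 * a - b - 1 / 2))
      =O[atTop] fun r : ℝ => r ^ (-1 + ε₁) := by
  set c := 2 * a - b - 1 / 2 with hcdef
  have hc0 : c < 0 := by rw [hcdef]; linarith
  -- eventual exponential smallness
  have hexp : ∀ᶠ r : ℝ in atTop, Real.exp (-(r ^ 2 / 4)) * r ^ (-c) ≤ r ^ (-1 + ε₁) := by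
    have h0 : Tendsto (fun r : ℝ => r ^ (-c + 1 - ε₁) * Real.exp (-1 * r)) atTop (nhds 0) :=
      tendsto_rpow_mul_exp_neg_mul_atTop_nhds_zero _ 1 one_pos
    have h1 : ∀ᶠ r : ℝ in atTop, r ^ (-c + 1 - ε₁) * Real.exp (-1 * r) < 1 :=
      h0.eventually_lt_const one_pos
    filter_upwards [h1, eventually_ge_atTop (4 : ℝ)] with r h1 hr4
    have hr0 : (0 : ℝ) < r := by linarith
    have hr1 : (1 : ℝ) ≤ r := by linarith
    have e1 : Real.exp (-(r ^ 2 / 4)) ≤ Real.exp (-1 * r) := by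
      apply Real.exp_le_exp.2; nlinarith
    have e2 : r ^ (-c) = r ^ (-c + 1 - ε₁) * r ^ (-1 + ε₁) := by
      rw [← Real.rpow_add hr0]; ring_nf
    calc Real.exp (-(r ^ 2 / 4)) * r ^ (-c)
        ≤ Real.exp (-1 * r) * (r ^ (-c + 1 - ε₁) * r ^ (-1 + ε₁)) := by
          rw [← e2]; exact mul_le_mul_of_nonneg_right e1 (Real.rpow_nonneg hr0.le _)
      _ = (r ^ (-c + 1 - ε₁) * Real.exp (-1 * r)) * r ^ (-1 + ε₁) := by ring
      _ ≤ 1 * r ^ (-1 + ε₁) := by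
          exact mul_le_mul_of_nonneg_right h1.le (Real.rpow_nonneg hr0.le _)
      _ = r ^ (-1 + ε₁) := one_mul _
  rw [Asymptotics.isBigO_iff]
  refine ⟨(2 : ℝ) ^ (-c) * Real.sqrt π + 1, ?_⟩
  filter_upwards [eventually_ge_atTop (2 : ℝ), hexp] with r hr2 hre
  have hr0 : (0 : ℝ) < r := by linarith
  have hr1 : (1 : ℝ) ≤ r := by linarith
  have hinv : 1 / r ≤ 1 / 2 := by
    rw [div_le_div_iff₀ hr0 two_pos]; linarith
  have hinvpos : 0 < 1 / r := by positivity
  set f : ℝ → ℝ := fun x => Real.exp (-(x - 1) ^ 2 * r ^ 2) * x ^ c with hfdef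
  -- gaussian integrability
  have hg : Integrable (fun x : ℝ => Real.exp (-r ^ 2 * (x - 1) ^ 2)) := by
    have := (integrable_exp_neg_mul_sq (by positivity : (0:ℝ) < r ^ 2)).comp_sub_right 1
    exact this
  have hgform : ∀ x : ℝ, Real.exp (-(x - 1) ^ 2 * r ^ 2) = Real.exp (-r ^ 2 * (x - 1) ^ 2) := by
    intro x; ring_nf
  -- measurability of f
  have hfm : AEStronglyMeasurable f (volume.restrict (Ioi (1 / r))) := by
    apply Measurable.aestronglyMeasurable
    fun_prop
  -- pointwise bound on Ioi (1/r)
  have hbound : ∀ x ∈ Ioi (1 / r), ‖f x‖ ≤ r ^ (-c) * Real.exp (-r ^ 2 * (x - 1) ^ 2) := by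
    intro x hx
    have hx0 : 0 < x := lt_trans hinvpos hx
    have hxc : x ^ c ≤ (1 / r) ^ c := rpow_le_rpow_of_nonpos hinvpos (le_of_lt hx) hc0.le
    have hrc : (1 / r) ^ c = r ^ (-c) := by
      rw [one_div, ← Real.rpow_neg_one r, ← Real.rpow_mul hr0.le, neg_one_mul]
    rw [hfdef]
    simp only [norm_mul, Real.norm_eq_abs, abs_of_pos (Real.exp_pos _),
      abs_of_pos (Real.rpow_pos_of_pos hx0 c)]
    rw [hgform x, mul_comm (r ^ (-c))]
    exact mul_le_mul_of_nonneg_left (hxc.trans_eq hrc) (Real.exp_pos _).le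
  -- integrability of f on Ioi (1/r)
  have hfint : IntegrableOn f (Ioi (1 / r)) := by
    apply Integrable.mono ((hg.const_mul (r ^ (-c))).integrableOn) hfm
    filter_upwards [ae_restrict_mem measurableSet_Ioi] with x hx
    refine (hbound x hx).trans ?_
    rw [Real.norm_eq_abs, abs_of_nonneg (by positivity)]
  -- nonnegativity
  have hfnn : ∀ x : ℝ, 0 < x → 0 ≤ f x := fun x hx => by positivity
  -- split the integral
  have hsplit : ∫ x in Ioi (1 / r), f x
      = (∫ x in Ioc (1 / r) (1 / 2), f x) + ∫ x in Ioi (1 / 2 : ℝ), f x := by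
    rw [← setIntegral_union (Set.Ioc_disjoint_Ioi le_rfl) measurableSet_Ioi
      (hfint.mono_set (Set.Ioc_subset_Ioi_self.trans (le_refl _)))
      (hfint.mono_set (fun x hx => lt_of_le_of_lt hinv hx)),
      Set.Ioc_union_Ioi_eq_Ioi hinv]
  -- bound piece 1
  have hP1 : ∫ x in Ioc (1 / r) (1 / 2), f x ≤ Real.exp (-(r ^ 2 / 4)) * r ^ (-c) := by
    have hb : ∀ x ∈ Ioc (1 / r) (1 / 2), ‖f x‖ ≤ Real.exp (-(r ^ 2 / 4)) * r ^ (-c) := by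
      intro x hx
      have hx0 : 0 < x := lt_of_lt_of_le hinvpos hx.1.le
      refine (hbound x hx.1).trans ?_
      rw [mul_comm]
      apply mul_le_mul_of_nonneg_right _ (Real.rpow_nonneg hr0.le _)
      apply Real.exp_le_exp.2
      have : (1 : ℝ) / 4 ≤ (x - 1) ^ 2 := by nlinarith [hx.2]
      nlinarith [sq_nonneg r]
    calc ∫ x in Ioc (1 / r) (1 / 2), f x
        ≤ ‖∫ x in Ioc (1 / r) (1 / 2), f x‖ := le_abs_self _
      _ ≤ Real.exp (-(r ^ 2 / 4)) * r ^ (-c) * (volume (Ioc (1 / r) (1 / 2))).toReal := by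
          apply norm_setIntegral_le_of_norm_le_const _ hb
          rw [Real.volume_Ioc]; exact ENNReal.ofReal_lt_top
      _ ≤ Real.exp (-(r ^ 2 / 4)) * r ^ (-c) * 1 := by
          apply mul_le_mul_of_nonneg_left _ (by positivity)
          rw [Real.volume_Ioc, ENNReal.toReal_ofReal (by linarith)]
          linarith
      _ = _ := mul_one _
  -- bound piece 2
  have hP2 : ∫ x in Ioi (1 / 2 : ℝ), f x ≤ (2 : ℝ) ^ (-c) * (Real.sqrt π / r) := by
    have hb2 : ∀ x ∈ Ioi (1 / 2 : ℝ), f x ≤ (2 : ℝ) ^ (-c) * Real.exp (-r ^ 2 * (x - 1) ^ 2) := by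
      intro x hx
      have hx0 : (0:ℝ) < x := lt_trans (by norm_num) hx
      have hxc : x ^ c ≤ (1 / 2 : ℝ) ^ c := rpow_le_rpow_of_nonpos (by norm_num) hx.le hc0.le
      have h2c : ((1 : ℝ) / 2) ^ c = (2 : ℝ) ^ (-c) := by
        rw [one_div, ← Real.rpow_neg_one (2:ℝ), ← Real.rpow_mul (by norm_num : (0:ℝ) ≤ 2),
          neg_one_mul]
      rw [hfdef]
      simp only
      rw [hgform x, mul_comm ((2:ℝ) ^ (-c))]
      exact mul_le_mul_of_nonneg_left (hxc.trans_eq h2c) (Real.exp_pos _).le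
    have hint2 : IntegrableOn f (Ioi (1 / 2 : ℝ)) :=
      hfint.mono_set (fun x hx => lt_of_le_of_lt hinv hx)
    calc ∫ x in Ioi (1 / 2 : ℝ), f x
        ≤ ∫ x in Ioi (1 / 2 : ℝ), (2 : ℝ) ^ (-c) * Real.exp (-r ^ 2 * (x - 1) ^ 2) :=
          setIntegral_mono_on hint2 ((hg.const_mul _).integrableOn) measurableSet_Ioi hb2
      _ ≤ ∫ x : ℝ, (2 : ℝ) ^ (-c) * Real.exp (-r ^ 2 * (x - 1) ^ 2) := by
          apply setIntegral_le_integral (hg.const_mul _)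
          filter_upwards with x; positivity
      _ = (2 : ℝ) ^ (-c) * ∫ x : ℝ, Real.exp (-r ^ 2 * (x - 1) ^ 2) := integral_const_mul _ _
      _ = (2 : ℝ) ^ (-c) * (Real.sqrt π / r) := by
          congr 1
          rw [integral_sub_right_eq_self (fun x => Real.exp (-r ^ 2 * x ^ 2)) 1, integral_gaussian]
          rw [Real.sqrt_div pi_pos.le, Real.sqrt_sq hr0.le]
  -- combine
  have hnn : 0 ≤ ∫ x in Ioi (1 / r), f x :=
    setIntegral_nonneg measurableSet_Ioi (fun x hx => hfnn x (lt_trans hinvpos hx))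
  have key : ∫ x in Ioi (1 / r), f x ≤ ((2 : ℝ) ^ (-c) * Real.sqrt π + 1) * r ^ (-1 + ε₁) := by
    have hrm : Real.sqrt π / r ≤ Real.sqrt π * r ^ (-1 + ε₁) := by
      rw [div_eq_mul_inv, ← Real.rpow_neg_one r]
      exact mul_le_mul_of_nonneg_left
        (Real.rpow_le_rpow_of_exponent_le hr1 (by linarith)) (Real.sqrt_nonneg _)
    calc ∫ x in Ioi (1 / r), f x
        = (∫ x in Ioc (1 / r) (1 / 2), f x) + ∫ x in Ioi (1 / 2 : ℝ), f x := hsplit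
      _ ≤ r ^ (-1 + ε₁) + (2 : ℝ) ^ (-c) * (Real.sqrt π * r ^ (-1 + ε₁)) := by
          gcongr
          · exact hP1.trans hre
          · refine hP2.trans ?_
            exact mul_le_mul_of_nonneg_left hrm (Real.rpow_nonneg (by norm_num) _)
      _ = ((2 : ℝ) ^ (-c) * Real.sqrt π + 1) * r ^ (-1 + ε₁) := by ring
  have hgoal : ‖∫ x in Ioi (1 / r), f x‖
      ≤ ((2 : ℝ) ^ (-c) * Real.sqrt π + 1) * ‖r ^ (-1 + ε₁)‖ := by
    rw [Real.norm_eq_abs, Real.norm_eq_abs, abs_of_nonneg hnn,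
      abs_of_nonneg (Real.rpow_nonneg hr0.le _)]
    exact key
  exact hgoal
end

section
/- Let $k \in \mathbb{Z}$, $n > 0$ real, and let $\varphi: \mathbb{R}_+ \to \mathbb{C}$ be measurable with $\varphi_{2-k}(x) := \varphi(x)x^{1-k}$. If both sides converge absolutely, then $\int_0^\infty \Gamma(1-k, 4\pi n y)\, e^{2\pi n y}\, \varphi(y)\,dy = (4\pi n)^{1-k}\int_0^\infty \frac{(\mathcal{L}\varphi_{2-k})(2\pi n (2t+1))}{(1+t)^k}\,dt$. -/
open MeasureTheory Set Real

/-- The upper incomplete gamma function `Γ(a, x) = ∫_x^∞ e^{-t} t^{a-1} dt`. -/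
noncomputable def GammaUpper (a x : ℝ) : ℝ :=
  ∫ t in Ioi x, Real.exp (-t) * t ^ (a - 1)

lemma integral_Ioi_comp_add_one {E : Type*} [NormedAddCommGroup E] [NormedSpace ℝ E]
    (f : ℝ → E) : ∫ t in Ioi (0:ℝ), f (t + 1) = ∫ s in Ioi (1:ℝ), f s := by
  have h := (measurePreserving_add_right volume (1:ℝ)).setIntegral_preimage_emb
    (measurableEmbedding_addRight 1) f (Ioi 1)
  have hpre : (fun x : ℝ => x + 1) ⁻¹' Ioi 1 = Ioi 0 := by
    ext x; simp
  rwa [hpre] at h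

open Filter in
lemma integrable_aux {b : ℝ} (hb : 0 < b) (k : ℤ) :
    IntegrableOn (fun t : ℝ => Real.exp (-(b*(t+1))) * (1+t) ^ (-(k:ℝ))) (Ioi 0) := by
  apply integrable_of_isBigO_exp_neg (half_pos hb)
  · apply ContinuousOn.mul
    · exact (Real.continuous_exp.comp (by continuity)).continuousOn
    · refine ContinuousOn.rpow_const (continuous_const.add continuous_id).continuousOn fun x hx => Or.inl ?_
      have : (0:ℝ) < 1 + x := by simp at hx; linarith
      exact this.ne'
  · have h1 : Tendsto (fun x : ℝ => x ^ (-(k:ℝ)) * Real.exp (-(b/2) * x)) atTop (nhds 0) :=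
      tendsto_rpow_mul_exp_neg_mul_atTop_nhds_zero _ _ (half_pos hb)
    have h2 : Tendsto (fun t : ℝ => (1 + t) ^ (-(k:ℝ)) * Real.exp (-(b/2) * (1 + t))) atTop (nhds 0) :=
      h1.comp (tendsto_atTop_add_const_left atTop 1 tendsto_id)
    have h3 : (fun t : ℝ => (1 + t) ^ (-(k:ℝ)) * Real.exp (-(b/2) * (1 + t)))
        =O[atTop] (fun _ : ℝ => (1:ℝ)) := h2.isBigO_one ℝ
    have h4 := (h3.mul (Asymptotics.isBigO_refl (fun t : ℝ => Real.exp (-(b/2) * t)) atTop)).const_mul_left (Real.exp (-(b/2)))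
    refine h4.congr' ?_ ?_
    · filter_upwards [eventually_ge_atTop (0:ℝ)] with t ht
      rw [show rexp (-(b/2)) * ((1 + t) ^ (-(k:ℝ)) * rexp (-(b/2) * (1 + t)) * rexp (-(b/2) * t))
          = (1 + t) ^ (-(k:ℝ)) * (rexp (-(b/2)) * rexp (-(b/2) * (1 + t)) * rexp (-(b/2) * t)) by ring,
        ← Real.exp_add, ← Real.exp_add]
      rw [show -(b/2) + -(b/2) * (1+t) + -(b/2)*t = -(b*(t+1)) by ring]
      ring
    · filter_upwards with t; simp

lemma gammaUpper_eq (k : ℤ) {a : ℝ} (ha : 0 < a) :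
    GammaUpper (1 - k) a
      = ∫ t in Ioi (0:ℝ), a ^ ((1:ℝ) - k) * (Real.exp (-(a*(t+1))) * (1+t) ^ (-(k:ℝ))) := by
  rw [MeasureTheory.integral_const_mul]
  have h0 : ∫ t in Ioi (0:ℝ), Real.exp (-(a*(t+1))) * (1+t) ^ (-(k:ℝ))
      = ∫ s in Ioi (1:ℝ), Real.exp (-(a*s)) * s ^ (-(k:ℝ)) := by
    rw [← integral_Ioi_comp_add_one (fun s : ℝ => Real.exp (-(a*s)) * s ^ (-(k:ℝ)))]
    refine setIntegral_congr_fun measurableSet_Ioi fun t _ => ?_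
    rw [add_comm t 1]
  have h2 := integral_comp_mul_left_Ioi
    (fun u : ℝ => Real.exp (-u) * u ^ ((1 - (k:ℝ)) - 1)) 1 ha
  simp only [mul_one, smul_eq_mul] at h2
  have h3 : ∫ x in Ioi (1:ℝ), Real.exp (-(a*x)) * (a*x) ^ ((1 - (k:ℝ)) - 1)
      = a ^ (-(k:ℝ)) * ∫ s in Ioi (1:ℝ), Real.exp (-(a*s)) * s ^ (-(k:ℝ)) := by
    rw [← MeasureTheory.integral_const_mul]
    refine setIntegral_congr_fun measurableSet_Ioi fun x hx => ?_
    have hx0 : (0:ℝ) ≤ x := le_of_lt (lt_trans one_pos hx)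
    rw [show (1 - (k:ℝ)) - 1 = -(k:ℝ) by ring, Real.mul_rpow ha.le hx0]
    ring
  have hI : ∫ s in Ioi (1:ℝ), Real.exp (-(a*s)) * s ^ (-(k:ℝ))
      = a ^ ((k:ℝ) - 1) * GammaUpper (1 - k) a := by
    have key : a ^ (-(k:ℝ)) * ∫ s in Ioi (1:ℝ), Real.exp (-(a*s)) * s ^ (-(k:ℝ))
        = a⁻¹ * GammaUpper (1 - k) a := by
      rw [← h3, h2]; rfl
    calc ∫ s in Ioi (1:ℝ), Real.exp (-(a*s)) * s ^ (-(k:ℝ))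
        = (a ^ ((k:ℝ)) * a ^ (-(k:ℝ))) * ∫ s in Ioi (1:ℝ), Real.exp (-(a*s)) * s ^ (-(k:ℝ)) := by
          rw [← Real.rpow_add ha]; simp
      _ = a ^ ((k:ℝ)) * (a⁻¹ * GammaUpper (1 - k) a) := by rw [mul_assoc, key]
      _ = a ^ ((k:ℝ) - 1) * GammaUpper (1 - k) a := by
          rw [← Real.rpow_neg_one a, ← mul_assoc, ← Real.rpow_add ha]
          ring_nf
  rw [h0, hI, ← mul_assoc, ← Real.rpow_add ha]
  norm_num


/-- Identity (4.14) of Diamantis–Lee–Raji–Rolen relating the incomplete-gamma weighted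
integral of `φ` to an integral of the Laplace transform of `φ_{2-k}`. -/
theorem nonholomorphic_part_identity (k : ℤ) (n : ℝ) (hn : 0 < n) (φ : ℝ → ℂ)
    (hLHS : IntegrableOn (fun y : ℝ =>
      (GammaUpper (1 - k) (4 * π * n * y) : ℂ) * Complex.exp (↑(2 * π * n * y)) * φ y)
      (Ioi 0))
    (hinner : ∀ t : ℝ, 0 ≤ t → IntegrableOn (fun x : ℝ =>
      φ x * (x : ℂ) ^ ((1 : ℂ) - (k : ℂ)) * Complex.exp (↑(-(2 * π * n * (2 * t + 1) * x))))
      (Ioi 0))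
    (hRHS : IntegrableOn (fun t : ℝ =>
      (∫ x in Ioi (0 : ℝ),
          φ x * (x : ℂ) ^ ((1 : ℂ) - (k : ℂ)) * Complex.exp (↑(-(2 * π * n * (2 * t + 1) * x))))
        / ((1 + t : ℝ) : ℂ) ^ k) (Ioi 0)) :
    ∫ y in Ioi (0 : ℝ),
        (GammaUpper (1 - k) (4 * π * n * y) : ℂ) * Complex.exp (↑(2 * π * n * y)) * φ y
      = ↑((4 * π * n) ^ (1 - k)) *
        ∫ t in Ioi (0 : ℝ),
          (∫ x in Ioi (0 : ℝ),
              φ x * (x : ℂ) ^ ((1 : ℂ) - (k : ℂ))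
                * Complex.exp (↑(-(2 * π * n * (2 * t + 1) * x))))
            / ((1 + t : ℝ) : ℂ) ^ k := by

  have hπ := Real.pi_pos
  have h4 : (0:ℝ) < 4 * π * n := by positivity
  set C : ℝ := (4 * π * n) ^ (1 - k) with hCdef
  have hCpos : 0 < C := zpow_pos h4 _
  have hCr : (4 * π * n) ^ ((1:ℝ) - (k:ℝ)) = C := by
    rw [show ((1:ℝ) - (k:ℝ)) = ((1 - k : ℤ) : ℝ) by push_cast; ring, Real.rpow_intCast]
  set F : ℝ → ℝ → ℂ := fun y t => φ y *
    ((C:ℂ) * (y:ℂ) ^ ((1:ℂ) - (k:ℂ)) * Complex.exp (↑(-(2 * π * n * (2 * t + 1) * y)))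
      / ((1 + t : ℝ) : ℂ) ^ k) with hFdef
  -- real-level gamma identity
  have hgamma2 : ∀ y : ℝ, 0 < y → Real.exp (2*π*n*y) * GammaUpper (1 - k) (4*π*n*y)
      = ∫ t in Ioi (0:ℝ), C * y ^ ((1:ℝ) - (k:ℝ)) * Real.exp (-(2*π*n*(2*t+1)*y))
          * (1+t) ^ (-(k:ℝ)) := by
    intro y hy0
    have ha : (0:ℝ) < 4 * π * n * y := by positivity
    rw [gammaUpper_eq k ha, ← MeasureTheory.integral_const_mul]
    refine setIntegral_congr_fun measurableSet_Ioi fun t ht => ?_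
    have hexp : Real.exp (2*π*n*y) * Real.exp (-(4*π*n*y*(t+1)))
        = Real.exp (-(2*π*n*(2*t+1)*y)) := by
      rw [← Real.exp_add]; ring_nf
    rw [Real.mul_rpow h4.le hy0.le, hCr, ← hexp]
    ring
  have hcast : ∀ g : ℝ → ℝ, ((∫ t in Ioi (0:ℝ), g t : ℝ) : ℂ) = ∫ t in Ioi (0:ℝ), (g t : ℂ) :=
    fun g => integral_ofReal.symm
  -- Step A: pointwise identity
  have stepA : ∀ y ∈ Ioi (0:ℝ),
      (GammaUpper (1 - k) (4 * π * n * y) : ℂ) * Complex.exp (↑(2 * π * n * y)) * φ y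
        = ∫ t in Ioi (0:ℝ), F y t := by
    intro y hy
    have hy0 : (0:ℝ) < y := hy
    calc (GammaUpper (1 - k) (4 * π * n * y) : ℂ) * Complex.exp (↑(2 * π * n * y)) * φ y
        = φ y * ((Real.exp (2*π*n*y) * GammaUpper (1 - k) (4*π*n*y) : ℝ) : ℂ) := by
          push_cast
          ring
      _ = ∫ t in Ioi (0:ℝ), φ y * ((C * y ^ ((1:ℝ) - (k:ℝ)) * Real.exp (-(2*π*n*(2*t+1)*y))
            * (1+t) ^ (-(k:ℝ)) : ℝ) : ℂ) := by
          rw [hgamma2 y hy0, hcast]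
          exact (MeasureTheory.integral_const_mul _ _).symm
      _ = ∫ t in Ioi (0:ℝ), F y t := by
          refine setIntegral_congr_fun measurableSet_Ioi fun t ht => ?_
          have h1t : (0:ℝ) < 1 + t := by have : (0:ℝ) < t := ht; linarith
          have c2 : (((1+t) ^ (-(k:ℝ)) : ℝ) : ℂ) = (((1 + t : ℝ) : ℂ) ^ k)⁻¹ := by
            rw [show (-(k:ℝ)) = ((-k : ℤ) : ℝ) by push_cast; ring, Real.rpow_intCast,
              Complex.ofReal_zpow, zpow_neg]
          rw [hFdef]
          dsimp only
          rw [Complex.ofReal_mul, Complex.ofReal_mul, Complex.ofReal_mul, c2, div_eq_mul_inv]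
          push_cast [Complex.ofReal_cpow hy0.le, Complex.ofReal_exp]
          ring
  -- measurability of φ
  have hcpow : ∀ s : ℂ, ContinuousOn (fun x : ℝ => (x:ℂ) ^ s) (Ioi 0) := by
    intro s x hx
    exact ((continuousAt_cpow_const
      (Complex.ofReal_mem_slitPlane.2 hx)).comp
      Complex.continuous_ofReal.continuousAt).continuousWithinAt
  have hφm : AEStronglyMeasurable φ (volume.restrict (Ioi 0)) := by
    have h0 := (hinner 0 le_rfl).aestronglyMeasurable
    have hmul : AEStronglyMeasurable (fun x : ℝ =>
        (φ x * (x:ℂ) ^ ((1:ℂ) - (k:ℂ)) * Complex.exp (↑(-(2*π*n*(2*(0:ℝ)+1)*x))))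
          * ((x:ℂ) ^ ((k:ℂ) - 1) * Complex.exp (↑(2*π*n*x)))) (volume.restrict (Ioi 0)) := by
      refine h0.mul ?_
      refine (((hcpow ((k:ℂ) - 1)).aestronglyMeasurable measurableSet_Ioi)).mul ?_
      exact (Complex.continuous_exp.comp (by continuity)).aestronglyMeasurable
    refine hmul.congr ?_
    rw [Filter.EventuallyEq, ae_restrict_iff' measurableSet_Ioi]
    filter_upwards with x hx
    have hx0 : (x:ℂ) ≠ 0 := Complex.ofReal_ne_zero.2 (ne_of_gt hx)
    have hcp : (x:ℂ) ^ ((1:ℂ) - (k:ℂ)) * (x:ℂ) ^ ((k:ℂ) - 1) = 1 := by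
      rw [← Complex.cpow_add _ _ hx0]
      norm_num
    have hex : Complex.exp (↑(-(2*π*n*(2*(0:ℝ)+1)*x))) * Complex.exp (↑(2*π*n*x)) = 1 := by
      rw [← Complex.exp_add, ← Complex.exp_zero]
      congr 1
      push_cast
      ring
    calc (φ x * (x:ℂ) ^ ((1:ℂ) - (k:ℂ)) * Complex.exp (↑(-(2*π*n*(2*(0:ℝ)+1)*x))))
          * ((x:ℂ) ^ ((k:ℂ) - 1) * Complex.exp (↑(2*π*n*x)))
        = φ x * (((x:ℂ) ^ ((1:ℂ) - (k:ℂ)) * (x:ℂ) ^ ((k:ℂ) - 1))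
            * (Complex.exp (↑(-(2*π*n*(2*(0:ℝ)+1)*x))) * Complex.exp (↑(2*π*n*x)))) := by ring
      _ = φ x := by rw [hcp, hex]; ring
  -- measurability of uncurried F
  have hF : AEStronglyMeasurable (Function.uncurry F)
      ((volume.restrict (Ioi (0:ℝ))).prod (volume.restrict (Ioi (0:ℝ)))) := by
    have hG : AEStronglyMeasurable (fun p : ℝ × ℝ =>
        (C:ℂ) * (p.1:ℂ) ^ ((1:ℂ) - (k:ℂ)) * Complex.exp (↑(-(2 * π * n * (2 * p.2 + 1) * p.1)))
          / ((1 + p.2 : ℝ) : ℂ) ^ k)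
        ((volume.restrict (Ioi (0:ℝ))).prod (volume.restrict (Ioi (0:ℝ)))) := by
      rw [Measure.prod_restrict]
      refine ContinuousOn.aestronglyMeasurable ?_ (measurableSet_Ioi.prod measurableSet_Ioi)
      refine ContinuousOn.div ?_ ?_ ?_
      · refine ContinuousOn.mul (ContinuousOn.mul continuousOn_const ?_) ?_
        · intro p hp
          have h1 : ContinuousAt (fun x : ℝ => (x:ℂ) ^ ((1:ℂ) - (k:ℂ))) p.1 :=
            (continuousAt_cpow_const
              (Complex.ofReal_mem_slitPlane.2 hp.1)).comp
              Complex.continuous_ofReal.continuousAt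
          exact (h1.comp continuousAt_fst).continuousWithinAt
        · exact (Complex.continuous_exp.comp (by fun_prop)).continuousOn
      · intro p hp
        have h1 : ((1 + p.2 : ℝ) : ℂ) ≠ 0 := by
          have : (0:ℝ) < 1 + p.2 := by have := mem_Ioi.1 hp.2; linarith
          exact_mod_cast this.ne'
        have h2 : ContinuousAt (fun p : ℝ × ℝ => ((1 + p.2 : ℝ) : ℂ)) p :=
          (Complex.continuous_ofReal.comp (continuous_const.add continuous_snd)).continuousAt
        have h3 : ContinuousAt (fun p : ℝ × ℝ => ((1 + p.2 : ℝ) : ℂ) ^ k) p :=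
          ContinuousAt.comp (g := fun z : ℂ => z ^ k) (continuousAt_zpow₀ _ _ (Or.inl h1)) h2
        exact h3.continuousWithinAt
      · intro p hp
        have h1 : ((1 + p.2 : ℝ) : ℂ) ≠ 0 := by
          have : (0:ℝ) < 1 + p.2 := by have := mem_Ioi.1 hp.2; linarith
          exact_mod_cast this.ne'
        exact zpow_ne_zero _ h1
    exact (hφm.comp_quasiMeasurePreserving Measure.quasiMeasurePreserving_fst).mul hG
  -- slice integrability
  have hslice : ∀ y ∈ Ioi (0:ℝ), Integrable (F y) (volume.restrict (Ioi 0)) := by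
    intro y hy
    have hy0 : (0:ℝ) < y := hy
    have hb : (0:ℝ) < 4*π*n*y := by positivity
    have hre : Integrable (fun t : ℝ =>
        ((Real.exp (-(4*π*n*y*(t+1))) * (1+t) ^ (-(k:ℝ)) : ℝ) : ℂ)) (volume.restrict (Ioi 0)) :=
      (integrable_aux hb k).ofReal
    have hint := hre.const_mul
        (φ y * ((C:ℂ) * (y:ℂ) ^ ((1:ℂ)-(k:ℂ)) * Complex.exp (↑(2*π*n*y))))
    refine hint.congr ?_
    rw [Filter.EventuallyEq, ae_restrict_iff' measurableSet_Ioi]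
    filter_upwards with t ht
    have h1t : (0:ℝ) < 1 + t := by have : (0:ℝ) < t := ht; linarith
    have c2 : (((1+t) ^ (-(k:ℝ)) : ℝ) : ℂ) = (((1 + t : ℝ) : ℂ) ^ k)⁻¹ := by
      rw [show (-(k:ℝ)) = ((-k : ℤ) : ℝ) by push_cast; ring, Real.rpow_intCast,
        Complex.ofReal_zpow, zpow_neg]
    have hexp : Complex.exp (↑(2*π*n*y)) * Complex.exp (↑(-(4*π*n*y*(t+1))))
        = Complex.exp (↑(-(2*π*n*(2*t+1)*y))) := by
      rw [← Complex.exp_add]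
      congr 1
      push_cast
      ring
    rw [hFdef]
    dsimp only
    rw [← hexp]
    push_cast [Complex.ofReal_exp, c2]
    ring
  -- norm integral
  have hnormint : Integrable (fun y => ∫ t in Ioi (0:ℝ), ‖F y t‖) (volume.restrict (Ioi 0)) := by
    refine hLHS.norm.congr ?_
    rw [Filter.EventuallyEq, ae_restrict_iff' measurableSet_Ioi]
    filter_upwards with y hy
    have hy0 : (0:ℝ) < y := hy
    have ha : (0:ℝ) < 4*π*n*y := by positivity
    have hΓ : (0:ℝ) ≤ GammaUpper (1 - k) (4*π*n*y) := by
      refine setIntegral_nonneg measurableSet_Ioi fun t ht => ?_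
      have ht0 : (0:ℝ) ≤ t := le_of_lt (lt_trans ha ht)
      exact mul_nonneg (Real.exp_pos _).le (Real.rpow_nonneg ht0 _)
    have hptwise : ∀ t ∈ Ioi (0:ℝ), ‖F y t‖
        = ‖φ y‖ * (C * y ^ ((1:ℝ) - (k:ℝ)) * Real.exp (-(2*π*n*(2*t+1)*y))
            * (1+t) ^ (-(k:ℝ))) := by
      intro t ht
      have h1t : (0:ℝ) < 1 + t := by have : (0:ℝ) < t := ht; linarith
      have c2r : (1+t) ^ (-(k:ℝ)) = ((1+t) ^ k)⁻¹ := by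
        rw [show (-(k:ℝ)) = ((-k : ℤ) : ℝ) by push_cast; ring, Real.rpow_intCast, zpow_neg]
      rw [hFdef]
      dsimp only
      have e3 : ‖Complex.exp (↑(-(2*π*n*(2*t+1)*y)))‖ = Real.exp (-(2*π*n*(2*t+1)*y)) := by
        rw [Complex.norm_exp, Complex.ofReal_re]
      have e1 : ‖((C:ℝ):ℂ)‖ = C := by
        rw [Complex.norm_real, Real.norm_eq_abs, abs_of_pos hCpos]
      have e2 : ‖(y:ℂ) ^ ((1:ℂ)-(k:ℂ))‖ = y ^ ((1:ℝ)-(k:ℝ)) := by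
        rw [Complex.norm_cpow_eq_rpow_re_of_pos hy0]
        norm_num
      have e4 : ‖((1+t:ℝ):ℂ)‖ = 1+t := by
        rw [Complex.norm_real, Real.norm_eq_abs, abs_of_pos h1t]
      rw [norm_mul, norm_div, norm_mul, norm_mul, norm_zpow, e3, e1, e2, e4, c2r]
      ring
    have h1 : ∫ t in Ioi (0:ℝ), ‖F y t‖
        = ‖φ y‖ * ∫ t in Ioi (0:ℝ), (C * y ^ ((1:ℝ) - (k:ℝ)) * Real.exp (-(2*π*n*(2*t+1)*y))
            * (1+t) ^ (-(k:ℝ))) := by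
      rw [setIntegral_congr_fun measurableSet_Ioi hptwise, MeasureTheory.integral_const_mul]
    rw [h1, ← hgamma2 y hy0, norm_mul, norm_mul, Complex.norm_real, Real.norm_eq_abs,
      abs_of_nonneg hΓ, Complex.norm_exp, Complex.ofReal_re]
    ring
  have hint : Integrable (Function.uncurry F)
      ((volume.restrict (Ioi (0:ℝ))).prod (volume.restrict (Ioi (0:ℝ)))) := by
    rw [MeasureTheory.integrable_prod_iff hF]
    constructor
    · filter_upwards [ae_restrict_mem measurableSet_Ioi] with y hy using hslice y hy
    · exact hnormint
  calc ∫ y in Ioi (0:ℝ),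
        (GammaUpper (1 - k) (4 * π * n * y) : ℂ) * Complex.exp (↑(2 * π * n * y)) * φ y
      = ∫ y in Ioi (0:ℝ), ∫ t in Ioi (0:ℝ), F y t :=
        setIntegral_congr_fun measurableSet_Ioi stepA
    _ = ∫ t in Ioi (0:ℝ), ∫ y in Ioi (0:ℝ), F y t := integral_integral_swap hint
    _ = ∫ t in Ioi (0:ℝ), (C:ℂ) *
          ((∫ x in Ioi (0:ℝ), φ x * (x:ℂ) ^ ((1:ℂ) - (k:ℂ))
              * Complex.exp (↑(-(2 * π * n * (2 * t + 1) * x)))) / ((1 + t : ℝ) : ℂ) ^ k) := by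
        refine setIntegral_congr_fun measurableSet_Ioi fun t _ => ?_
        have hrw : ∀ y : ℝ, F y t
            = (φ y * (y:ℂ) ^ ((1:ℂ) - (k:ℂ)) * Complex.exp (↑(-(2 * π * n * (2 * t + 1) * y))))
              * ((C:ℂ) / ((1 + t : ℝ) : ℂ) ^ k) := by
          intro y; rw [hFdef]; ring
        simp_rw [hrw]
        rw [MeasureTheory.integral_mul_const]
        ring
    _ = (C:ℂ) * ∫ t in Ioi (0:ℝ),
          (∫ x in Ioi (0:ℝ), φ x * (x:ℂ) ^ ((1:ℂ) - (k:ℂ))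
              * Complex.exp (↑(-(2 * π * n * (2 * t + 1) * x)))) / ((1 + t : ℝ) : ℂ) ^ k :=
        MeasureTheory.integral_const_mul _ _
end
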